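/- The following are equivalent. (i) There exists a probability measure g on T that is consistent with the data and whose instrument-response marginal p_g satisfies the linear restrictions: for every m ∈ Fin M, Σ_{tᶻ : Fin 2 → X} A m tᶻ · p_g tᶻ ≤ r m. (ii) There exists a function p : (Fin 2 → X) → ℝ≥0 with Σ_{tᶻ} p tᶻ = 1 such that: for every m ∈ Fin M, Σ_{tᶻ} A m tᶻ · p tᶻ ≤ r m; for every k ∈ Fin 2 and x ∈ X, Σ over tᶻ with tᶻ k = x of p tᶻ = ∫_Y φ k x dμ; and for every x ∈ X, p (fun _ => x) ≤ Ψ x (the mass of always-x takers is bounded by the overlap integral). -/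

import Mathlib

open MeasureTheory
open scoped ENNReal NNReal

section Aux
open Function Set

lemma pi_eval_apply {ι : Type*} [Fintype ι] [DecidableEq ι] {α : ι → Type*}
    [∀ i, MeasurableSpace (α i)] (ν : ∀ i, Measure (α i)) [∀ i, IsProbabilityMeasure (ν i)]
    (i : ι) (B : Set (α i)) :
    Measure.pi ν (Function.eval i ⁻¹' B) = ν i B := by
  rw [Set.eval_preimage, Measure.pi_pi]
  rw [Finset.prod_eq_single i (fun j _ hj => by simp [Function.update_of_ne hj])]
  · simp
  · simp

lemma eq_const_iff {X : Type*} (tz : Fin 2 → X) (x : X) :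
    tz = (fun _ => x) ↔ tz 0 = x ∧ tz 1 = x := by
  rw [funext_iff, Fin.forall_fin_two]

end Aux

/-- **Theorem 1, sharp observable implications of binary instruments.**
For a binary instrument, the existence of a probability measure on response types that is
consistent with the observed sub-densities and whose instrument-response marginal satisfies
the linear restrictions `A p ≤ r` is equivalent to the existence of a distribution `p` over
instrument-response types satisfying the linear restrictions, matching the observed
conditional treatment probabilities, and with the mass of always-`x` takers bounded by the
overlap `Ψ x = ∫ min (φ 0 x) (φ 1 x) dμ` for every treatment value `x`. -/
theorem sharp_binary_instrument
    {Y : Type*} [MeasurableSpace Y] [Nonempty Y] (μ : Measure Y) [SigmaFinite μ]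
    {X : Type*} [Fintype X] [Nonempty X] [DecidableEq X]
    [MeasurableSpace X] [MeasurableSingletonClass X]
    (φ : Fin 2 → X → Y → NNReal) (hφ : ∀ k x, Measurable (φ k x))
    (hmass : ∀ k : Fin 2, ∑ x : X, ∫⁻ y, (φ k x y : ℝ≥0∞) ∂μ = 1)
    (M : ℕ) (A : Fin M → (Fin 2 → X) → ℝ) (r : Fin M → ℝ) :
    (∃ g : Measure ((Fin 2 → X) × (X → Y)), IsProbabilityMeasure g ∧
      (∀ (k : Fin 2) (x : X) (B : Set Y), MeasurableSet B →
        g {t | t.1 k = x ∧ t.2 x ∈ B} = ∫⁻ y in B, (φ k x y : ℝ≥0∞) ∂μ) ∧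
      (∀ m : Fin M, ∑ tz : Fin 2 → X, A m tz * (g {t | t.1 = tz}).toReal ≤ r m))
    ↔
    (∃ p : (Fin 2 → X) → NNReal, ∑ tz : Fin 2 → X, p tz = 1 ∧
      (∀ m : Fin M, ∑ tz : Fin 2 → X, A m tz * (p tz : ℝ) ≤ r m) ∧
      (∀ (k : Fin 2) (x : X),
        ((∑ tz ∈ Finset.univ.filter (fun tz : Fin 2 → X => tz k = x), p tz : NNReal) : ℝ≥0∞) =
          ∫⁻ y, (φ k x y : ℝ≥0∞) ∂μ) ∧
      (∀ x : X, ((p (fun _ => x) : NNReal) : ℝ≥0∞) ≤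
        ∫⁻ y, ((min (φ 0 x y) (φ 1 x y) : NNReal) : ℝ≥0∞) ∂μ)) := by
  constructor
  · rintro ⟨g, hgp, hcons, hlin⟩
    set T := (Fin 2 → X) × (X → Y)
    have hSm : ∀ tz : Fin 2 → X, MeasurableSet {t : T | t.1 = tz} := fun tz =>
      measurable_fst (measurableSet_singleton tz)
    refine ⟨fun tz => (g {t : T | t.1 = tz}).toNNReal, ?_, ?_, ?_, ?_⟩
    · -- sum = 1
      have h1 : ((∑ tz : Fin 2 → X, (g {t : T | t.1 = tz}).toNNReal : NNReal) : ℝ≥0∞) = 1 := by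
        push_cast
        simp_rw [ENNReal.coe_toNNReal (measure_ne_top g _)]
        rw [← measure_biUnion_finset ?_ (fun tz _ => hSm tz)]
        · rw [show (⋃ tz ∈ Finset.univ, {t : T | t.1 = tz}) = Set.univ from by ext t; simp]
          exact measure_univ
        · intro a _ b _ hab
          exact Set.disjoint_left.2 fun t (h1 : t.1 = a) (h2 : t.1 = b) => hab (h1 ▸ h2)
      exact_mod_cast h1
    · -- linear restrictions
      intro m
      convert hlin m using 2
      rfl
    · -- marginals
      intro k x
      push_cast
      simp_rw [ENNReal.coe_toNNReal (measure_ne_top g _)]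
      rw [← measure_biUnion_finset ?_ (fun tz _ => hSm tz)]
      · have h2 := hcons k x Set.univ MeasurableSet.univ
        rw [Measure.restrict_univ] at h2
        rw [← h2]
        congr 1
        ext t
        simp only [Set.mem_iUnion, Finset.mem_coe, Finset.mem_filter, Finset.mem_univ, true_and,
          Set.mem_setOf_eq]
        exact ⟨fun ⟨tz, htz, h⟩ => ⟨h ▸ htz, Set.mem_univ _⟩, fun h => ⟨t.1, h.1, rfl⟩⟩
      · intro a _ b _ hab
        exact Set.disjoint_left.2 fun t (h1 : t.1 = a) (h2 : t.1 = b) => hab (h1 ▸ h2)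
    · -- overlap
      intro x
      rw [ENNReal.coe_toNNReal (measure_ne_top g _)]
      set B : Set Y := {y | φ 0 x y ≤ φ 1 x y} with hBdef
      have hB : MeasurableSet B := measurableSet_le (hφ 0 x) (hφ 1 x)
      set cx : Fin 2 → X := fun _ => x with hcx
      have hsplit : g ({t : T | t.1 = cx} ∩ {t : T | t.2 x ∈ B}) +
          g ({t : T | t.1 = cx} \ {t : T | t.2 x ∈ B}) = g {t : T | t.1 = cx} :=
        measure_inter_add_diff _ (((measurable_pi_apply x).comp measurable_snd) hB)
      have h0 : g ({t : T | t.1 = cx} ∩ {t : T | t.2 x ∈ B}) ≤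
          ∫⁻ y in B, (φ 0 x y : ℝ≥0∞) ∂μ := by
        rw [← hcons 0 x B hB]
        exact measure_mono fun t ⟨h1, h2⟩ => ⟨by rw [h1], h2⟩
      have h1 : g ({t : T | t.1 = cx} \ {t : T | t.2 x ∈ B}) ≤
          ∫⁻ y in Bᶜ, (φ 1 x y : ℝ≥0∞) ∂μ := by
        rw [← hcons 1 x Bᶜ hB.compl]
        exact measure_mono fun t ⟨h1, h2⟩ => ⟨by rw [h1], h2⟩
      have e0 : ∫⁻ y in B, (φ 0 x y : ℝ≥0∞) ∂μ
          = ∫⁻ y in B, ((min (φ 0 x y) (φ 1 x y) : NNReal) : ℝ≥0∞) ∂μ := by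
        refine setLIntegral_congr_fun hB (fun y hy => ?_)
        rw [min_eq_left hy]
      have e1 : ∫⁻ y in Bᶜ, (φ 1 x y : ℝ≥0∞) ∂μ
          = ∫⁻ y in Bᶜ, ((min (φ 0 x y) (φ 1 x y) : NNReal) : ℝ≥0∞) ∂μ := by
        refine setLIntegral_congr_fun hB.compl (fun y hy => ?_)
        rw [min_eq_right (le_of_not_ge (by simpa [hBdef] using hy))]
      calc g {t : T | t.1 = cx}
          = _ + _ := hsplit.symm
        _ ≤ ∫⁻ y in B, ((min (φ 0 x y) (φ 1 x y) : NNReal) : ℝ≥0∞) ∂μ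
            + ∫⁻ y in Bᶜ, ((min (φ 0 x y) (φ 1 x y) : NNReal) : ℝ≥0∞) ∂μ := by
            rw [← e0, ← e1]; exact add_le_add h0 h1
        _ = ∫⁻ y, ((min (φ 0 x y) (φ 1 x y) : NNReal) : ℝ≥0∞) ∂μ :=
            lintegral_add_compl _ hB
  · rintro ⟨p, hsum, hlin, hmarg, hover⟩
    classical
    obtain ⟨y0⟩ := ‹Nonempty Y›
    set T := (Fin 2 → X) × (X → Y) with hT
    -- basic quantities
    set mfun : X → Y → ℝ≥0∞ := fun x y => ((min (φ 0 x y) (φ 1 x y) : NNReal) : ℝ≥0∞) with hmfe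
    have hm_meas : ∀ x, Measurable (mfun x) :=
      fun x => ((hφ 0 x).min (hφ 1 x)).coe_nnreal_ennreal
    set Ψ : X → ℝ≥0∞ := fun x => ∫⁻ y, mfun x y ∂μ with hΨe
    set a : X → ℝ≥0∞ := fun x => (p (fun _ => x) : ℝ≥0∞) with hae
    set I : Fin 2 → X → ℝ≥0∞ := fun k x => ∫⁻ y, (φ k x y : ℝ≥0∞) ∂μ with hIe
    have hI_ne : ∀ k x, I k x ≠ ∞ := fun k x =>
      (lt_of_le_of_lt ((hmass k) ▸ Finset.single_le_sum (f := fun x => I k x)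
        (fun _ _ => zero_le) (Finset.mem_univ x)) ENNReal.one_lt_top).ne
    have hm_le : ∀ (k : Fin 2) x y, mfun x y ≤ (φ k x y : ℝ≥0∞) := by
      intro k x y
      fin_cases k
      · exact ENNReal.coe_le_coe.2 (min_le_left _ _)
      · exact ENNReal.coe_le_coe.2 (min_le_right _ _)
    have hΨ_ne : ∀ x, Ψ x ≠ ∞ := fun x =>
      (lt_of_le_of_lt (lintegral_mono (hm_le 0 x)) (lt_of_le_of_ne le_top (hI_ne 0 x))).ne
    have ha_le_Ψ : ∀ x, a x ≤ Ψ x := hover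
    have ha_ne : ∀ x, a x ≠ ∞ := fun x => ENNReal.coe_ne_top
    set c : X → ℝ≥0∞ := fun x => a x / Ψ x with hce
    have hc_le_one : ∀ x, c x ≤ 1 :=
      fun x => ENNReal.div_le_of_le_mul (by simpa using ha_le_Ψ x)
    set dA : X → Y → ℝ≥0∞ := fun x y => c x * mfun x y with hdAe
    have hdA_meas : ∀ x, Measurable (dA x) := fun x => (hm_meas x).const_mul _
    have hdA_le_m : ∀ x y, dA x y ≤ mfun x y :=
      fun x y => mul_le_of_le_one_left (zero_le) (hc_le_one x)
    have hdA_le : ∀ (k : Fin 2) x y, dA x y ≤ (φ k x y : ℝ≥0∞) :=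
      fun k x y => (hdA_le_m x y).trans (hm_le k x y)
    have hint_dA : ∀ x, ∫⁻ y, dA x y ∂μ = a x := by
      intro x
      rw [lintegral_const_mul _ (hm_meas x)]
      by_cases h : Ψ x = 0
      · have ha0 : a x = 0 := le_antisymm (h ▸ ha_le_Ψ x) (zero_le)
        show c x * Ψ x = a x
        rw [h, ha0, mul_zero]
      · exact ENNReal.div_mul_cancel h (hΨ_ne x)
    -- marginal facts
    have ha_le_I : ∀ (k : Fin 2) x, a x ≤ I k x := by
      intro k x
      show a x ≤ ∫⁻ y, (φ k x y : ℝ≥0∞) ∂μ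
      rw [← hmarg k x]
      exact ENNReal.coe_le_coe.2 (Finset.single_le_sum (fun _ _ => zero_le)
        (Finset.mem_filter.2 ⟨Finset.mem_univ _, rfl⟩))
    set w : Fin 2 → X → ℝ≥0∞ := fun k x => I k x - a x with hwe
    have hw_ne : ∀ k x, w k x ≠ ∞ := fun k x => (tsub_le_self.trans_lt
      (lt_of_le_of_ne le_top (hI_ne k x))).ne
    set d : Fin 2 → X → Y → ℝ≥0∞ := fun k x y => (φ k x y : ℝ≥0∞) - dA x y with hde
    have hd_meas : ∀ k x, Measurable (d k x) :=
      fun k x => ((hφ k x).coe_nnreal_ennreal).sub (hdA_meas x)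
    have hint_d : ∀ k x, ∫⁻ y, d k x y ∂μ = w k x := by
      intro k x
      rw [lintegral_sub (hdA_meas x) (by rw [hint_dA x]; exact ha_ne x)
        (Filter.Eventually.of_forall (hdA_le k x)), hint_dA x]
    -- component measures
    set qA : X → Measure Y := fun x => if Ψ x = 0 then Measure.dirac y0
        else μ.withDensity (fun y => mfun x y * (Ψ x)⁻¹) with hqAe
    have hqA_prob : ∀ x, IsProbabilityMeasure (qA x) := by
      intro x
      by_cases h : Ψ x = 0
      · simp only [hqAe, if_pos h]; infer_instance
      · simp only [hqAe, if_neg h]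
        constructor
        rw [withDensity_apply _ MeasurableSet.univ, Measure.restrict_univ,
          lintegral_mul_const _ (hm_meas x), ENNReal.mul_inv_cancel h (hΨ_ne x)]
    have hqA_key : ∀ x (B : Set Y), MeasurableSet B →
        a x * qA x B = ∫⁻ y in B, dA x y ∂μ := by
      intro x B hB
      by_cases h : Ψ x = 0
      · have ha0 : a x = 0 := le_antisymm (h ▸ ha_le_Ψ x) (zero_le)
        have hc0 : c x = 0 := by rw [hce]; simp [ha0]
        simp [ha0, hdAe, hc0]
      · simp only [hqAe, if_neg h]
        rw [withDensity_apply _ hB, ← lintegral_const_mul _ ((hm_meas x).mul_const _)]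
        refine lintegral_congr fun y => ?_
        show a x * (mfun x y * (Ψ x)⁻¹) = a x / Ψ x * mfun x y
        rw [div_eq_mul_inv, mul_assoc, mul_comm ((Ψ x)⁻¹) (mfun x y)]
    set q : Fin 2 → X → Measure Y := fun k x => if w k x = 0 then Measure.dirac y0
        else μ.withDensity (fun y => d k x y * (w k x)⁻¹) with hqe
    have hq_prob : ∀ k x, IsProbabilityMeasure (q k x) := by
      intro k x
      by_cases h : w k x = 0
      · simp only [hqe, if_pos h]; infer_instance
      · simp only [hqe, if_neg h]
        constructor
        rw [withDensity_apply _ MeasurableSet.univ, Measure.restrict_univ,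
          lintegral_mul_const _ (hd_meas k x), hint_d k x,
          ENNReal.mul_inv_cancel h (hw_ne k x)]
    have hq_key : ∀ k x (B : Set Y), MeasurableSet B →
        w k x * q k x B = ∫⁻ y in B, d k x y ∂μ := by
      intro k x B hB
      by_cases h : w k x = 0
      · have h2 : ∫⁻ y in B, d k x y ∂μ = 0 := le_antisymm
          (le_trans (setLIntegral_le_lintegral _ _) (by rw [hint_d k x, h])) (zero_le)
        rw [h, h2, zero_mul]
      · simp only [hqe, if_neg h]
        rw [withDensity_apply _ hB, lintegral_mul_const _ (hd_meas k x), ← mul_assoc,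
          mul_comm (w k x), mul_assoc, ENNReal.mul_inv_cancel h (hw_ne k x), mul_one]
    -- response-type conditional measures
    set ν : (Fin 2 → X) → X → Measure Y := fun tz x =>
      if tz 0 = x then (if tz 1 = x then qA x else q 0 x)
      else (if tz 1 = x then q 1 x else Measure.dirac y0) with hνe
    have hν_prob : ∀ tz x, IsProbabilityMeasure (ν tz x) := by
      intro tz x
      rw [hνe]
      dsimp only
      split_ifs
      · exact hqA_prob x
      · exact hq_prob 0 x
      · exact hq_prob 1 x
      · infer_instance
    have hπ_prob : ∀ tz, IsProbabilityMeasure (Measure.pi (ν tz)) := by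
      intro tz
      have := hν_prob tz
      infer_instance
    set g : Measure T :=
      ∑ tz : Fin 2 → X, (p tz : ℝ≥0∞) • ((Measure.dirac tz).prod (Measure.pi (ν tz))) with hge
    have hg_eval : ∀ S : Set T, MeasurableSet S →
        g S = ∑ tz : Fin 2 → X, (p tz : ℝ≥0∞) * Measure.pi (ν tz) (Prod.mk tz ⁻¹' S) := by
      intro S hS
      rw [hge, Measure.finset_sum_apply]
      refine Finset.sum_congr rfl fun tz _ => ?_
      have := hπ_prob tz
      rw [Measure.smul_apply, smul_eq_mul, Measure.dirac_prod,
        Measure.map_apply measurable_prodMk_left hS]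
    -- instrument-response marginal
    have hg_marg : ∀ tz' : Fin 2 → X, g {t : T | t.1 = tz'} = (p tz' : ℝ≥0∞) := by
      intro tz'
      have hS : MeasurableSet {t : T | t.1 = tz'} := measurable_fst (measurableSet_singleton tz')
      rw [hg_eval _ hS]
      have h1 : ∀ tz : Fin 2 → X, (p tz : ℝ≥0∞) * Measure.pi (ν tz)
          (Prod.mk tz ⁻¹' {t : T | t.1 = tz'}) = if tz = tz' then (p tz : ℝ≥0∞) else 0 := by
        intro tz
        have := hπ_prob tz
        by_cases h : tz = tz'
        · have : (Prod.mk tz ⁻¹' {t : T | t.1 = tz'}) = Set.univ := by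
            ext f; simp [h]; exact rfl
          rw [this, measure_univ, mul_one, if_pos h]
        · have : (Prod.mk tz ⁻¹' {t : T | t.1 = tz'}) = ∅ := by
            ext f; simp [h]; exact h
          rw [this, measure_empty, mul_zero, if_neg h]
      simp_rw [h1]
      rw [Finset.sum_ite_eq' Finset.univ tz' (fun tz => (p tz : ℝ≥0∞))]
      simp
    refine ⟨g, ?_, ?_, ?_⟩
    · -- probability
      constructor
      rw [hg_eval Set.univ MeasurableSet.univ]
      have h1 : ∀ tz : Fin 2 → X, (p tz : ℝ≥0∞) * Measure.pi (ν tz) (Prod.mk tz ⁻¹' Set.univ)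
          = (p tz : ℝ≥0∞) := by
        intro tz
        have := hπ_prob tz
        rw [Set.preimage_univ, measure_univ, mul_one]
      simp_rw [h1]
      rw [← ENNReal.coe_finset_sum, hsum, ENNReal.coe_one]
    · -- consistency
      intro k x B hB
      have hS : MeasurableSet {t : T | t.1 k = x ∧ t.2 x ∈ B} := by
        have heq : {t : T | t.1 k = x ∧ t.2 x ∈ B} =
            ((fun t : T => t.1 k) ⁻¹' {x}) ∩ ((fun t : T => t.2 x) ⁻¹' B) := rfl
        rw [heq]
        exact (((measurable_pi_apply k).comp measurable_fst) (measurableSet_singleton x)).inter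
          (((measurable_pi_apply x).comp measurable_snd) hB)
      rw [hg_eval _ hS]
      have hpre : ∀ tz : Fin 2 → X,
          (p tz : ℝ≥0∞) * Measure.pi (ν tz) (Prod.mk tz ⁻¹' {t : T | t.1 k = x ∧ t.2 x ∈ B})
          = if tz k = x then (p tz : ℝ≥0∞) * ν tz x B else 0 := by
        intro tz
        have := hν_prob tz
        by_cases h : tz k = x
        · rw [if_pos h]
          have hpe : (Prod.mk tz ⁻¹' {t : T | t.1 k = x ∧ t.2 x ∈ B})
              = Function.eval x ⁻¹' B := by
            ext f; exact ⟨fun hf => hf.2, fun hf => ⟨h, hf⟩⟩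
          rw [hpe, pi_eval_apply]
        · rw [if_neg h]
          have hpe : (Prod.mk tz ⁻¹' {t : T | t.1 k = x ∧ t.2 x ∈ B}) = ∅ := by
            ext f; exact ⟨fun hf => h hf.1, fun hf => hf.elim⟩
          rw [hpe, measure_empty, mul_zero]
      simp_rw [hpre]
      rw [← Finset.sum_filter]
      have h1 : Finset.univ.filter (fun tz : Fin 2 → X => tz 0 = x ∧ tz 1 = x)
          = {(fun _ => x : Fin 2 → X)} := by
        ext tz
        simp only [Finset.mem_filter, Finset.mem_univ, true_and, Finset.mem_singleton,
          eq_const_iff]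
      have hν1 : ν (fun _ => x : Fin 2 → X) x = qA x := by
        simp [hνe]
      have hk : k = 0 ∨ k = 1 := by
        fin_cases k
        exacts [Or.inl rfl, Or.inr rfl]
      rcases hk with rfl | rfl
      · -- k = 0
        have hsplit := Finset.sum_filter_add_sum_filter_not
          (Finset.univ.filter (fun tz : Fin 2 → X => tz 0 = x)) (fun tz => tz 1 = x)
          (fun tz => (p tz : ℝ≥0∞) * ν tz x B)
        rw [Finset.filter_filter, Finset.filter_filter, h1, Finset.sum_singleton] at hsplit
        have h2 : ∀ tz ∈ Finset.univ.filter (fun tz : Fin 2 → X => tz 0 = x ∧ ¬tz 1 = x),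
            (p tz : ℝ≥0∞) * ν tz x B = (p tz : ℝ≥0∞) * q 0 x B := by
          intro tz htz
          rw [Finset.mem_filter] at htz
          rw [hνe]
          dsimp only
          rw [if_pos htz.2.1, if_neg htz.2.2]
        rw [Finset.sum_congr rfl h2, ← Finset.sum_mul] at hsplit
        have hrest : (∑ tz ∈ Finset.univ.filter (fun tz : Fin 2 → X => tz 0 = x ∧ ¬tz 1 = x),
            (p tz : ℝ≥0∞)) = w 0 x := by
          have hI := hmarg 0 x
          push_cast at hI
          have hs2 := Finset.sum_filter_add_sum_filter_not
            (Finset.univ.filter (fun tz : Fin 2 → X => tz 0 = x)) (fun tz => tz 1 = x)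
            (fun tz => (p tz : ℝ≥0∞))
          rw [Finset.filter_filter, Finset.filter_filter, h1, Finset.sum_singleton, hI] at hs2
          exact ENNReal.eq_sub_of_add_eq (ha_ne x) (by rw [add_comm]; exact hs2)
        rw [hν1, hrest] at hsplit
        rw [← hsplit, hqA_key x B hB, hq_key 0 x B hB, ← lintegral_add_left (hdA_meas x)]
        refine lintegral_congr fun y => ?_
        exact add_tsub_cancel_of_le (hdA_le 0 x y)
      · -- k = 1
        have h1' : Finset.univ.filter (fun tz : Fin 2 → X => tz 1 = x ∧ tz 0 = x)
            = {(fun _ => x : Fin 2 → X)} := by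
          ext tz
          simp only [Finset.mem_filter, Finset.mem_univ, true_and, Finset.mem_singleton,
            eq_const_iff, and_comm]
        have hsplit := Finset.sum_filter_add_sum_filter_not
          (Finset.univ.filter (fun tz : Fin 2 → X => tz 1 = x)) (fun tz => tz 0 = x)
          (fun tz => (p tz : ℝ≥0∞) * ν tz x B)
        rw [Finset.filter_filter, Finset.filter_filter, h1', Finset.sum_singleton] at hsplit
        have h2 : ∀ tz ∈ Finset.univ.filter (fun tz : Fin 2 → X => tz 1 = x ∧ ¬tz 0 = x),
            (p tz : ℝ≥0∞) * ν tz x B = (p tz : ℝ≥0∞) * q 1 x B := by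
          intro tz htz
          rw [Finset.mem_filter] at htz
          rw [hνe]
          dsimp only
          rw [if_neg htz.2.2, if_pos htz.2.1]
        rw [Finset.sum_congr rfl h2, ← Finset.sum_mul] at hsplit
        have hrest : (∑ tz ∈ Finset.univ.filter (fun tz : Fin 2 → X => tz 1 = x ∧ ¬tz 0 = x),
            (p tz : ℝ≥0∞)) = w 1 x := by
          have hI := hmarg 1 x
          push_cast at hI
          have hs2 := Finset.sum_filter_add_sum_filter_not
            (Finset.univ.filter (fun tz : Fin 2 → X => tz 1 = x)) (fun tz => tz 0 = x)
            (fun tz => (p tz : ℝ≥0∞))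
          rw [Finset.filter_filter, Finset.filter_filter, h1', Finset.sum_singleton, hI] at hs2
          exact ENNReal.eq_sub_of_add_eq (ha_ne x) (by rw [add_comm]; exact hs2)
        rw [hν1, hrest] at hsplit
        rw [← hsplit, hqA_key x B hB, hq_key 1 x B hB, ← lintegral_add_left (hdA_meas x)]
        refine lintegral_congr fun y => ?_
        exact add_tsub_cancel_of_le (hdA_le 1 x y)
    · -- linear restrictions
      intro m
      have : ∀ tz : Fin 2 → X, (g {t : T | t.1 = tz}).toReal = (p tz : ℝ) := by
        intro tz
        rw [hg_marg tz]
        exact ENNReal.coe_toReal _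
      refine (Finset.sum_congr rfl fun tz _ => congrArg (A m tz * ·) (this tz)).trans_le ?_
      exact hlin m
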